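/- Let β ∈ (0,1) and let R_H > 0, R_L > 0 with R_H + R_L < 1 - β. For each S ∈ (0, 1-β) let ρ(S) denote the unique positive solution of E_0(ρ) = ρ·S, and write ρ_{HL} = ρ(R_H + R_L). Then sup_{R_L ≤ R' < 1-β-R_H} ρ(R_H + R')·R' = sup_{0 < ρ ≤ ρ_{HL}} ( E_0(ρ) - ρ·R_H ). -/

import Mathlib

/-- Base-2 Gallager function of the binary erasure channel with erasure probability `β`. -/
noncomputable def gallagerE0 (β ρ : ℝ) : ℝ := -Real.logb 2 (β + (1 - β) * 2 ^ (-ρ))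

lemma denom_pos {β : ℝ} (hβ0 : 0 < β) (hβ1 : β < 1) (ρ : ℝ) :
    0 < β + (1 - β) * (2:ℝ) ^ (-ρ) := by
  have h2 : (0:ℝ) < (2:ℝ) ^ (-ρ) := Real.rpow_pos_of_pos two_pos _
  nlinarith

lemma E0_hasDeriv {β : ℝ} (hβ0 : 0 < β) (hβ1 : β < 1) (ρ : ℝ) :
    HasDerivAt (gallagerE0 β)
      ((1 - β) * (2:ℝ) ^ (-ρ) / (β + (1 - β) * (2:ℝ) ^ (-ρ))) ρ := by
  have hbase : HasDerivAt (fun x : ℝ => (2:ℝ) ^ (-x))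
      ((2:ℝ) ^ (-ρ) * Real.log 2 * (-1)) ρ :=
    ((Real.hasStrictDerivAt_const_rpow two_pos (-ρ)).hasDerivAt).comp ρ (hasDerivAt_neg ρ)
  have hinner : HasDerivAt (fun x : ℝ => β + (1 - β) * (2:ℝ) ^ (-x))
      ((1 - β) * ((2:ℝ) ^ (-ρ) * Real.log 2 * (-1))) ρ :=
    (hbase.const_mul (1 - β)).const_add β
  have hlog : HasDerivAt (fun x : ℝ => Real.log (β + (1 - β) * (2:ℝ) ^ (-x)))
      ((1 - β) * ((2:ℝ) ^ (-ρ) * Real.log 2 * (-1)) / (β + (1 - β) * (2:ℝ) ^ (-ρ))) ρ :=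
    hinner.log (ne_of_gt (denom_pos hβ0 hβ1 ρ))
  have h := (hlog.div_const (Real.log 2)).neg
  have heq : ∀ x : ℝ, gallagerE0 β x = -(Real.log (β + (1 - β) * (2:ℝ) ^ (-x)) / Real.log 2) := by
    intro x; simp [gallagerE0, Real.logb, div_eq_mul_inv]
  rw [show (-fun x : ℝ => Real.log (β + (1 - β) * (2:ℝ) ^ (-x)) / Real.log 2)
      = gallagerE0 β from (funext fun x => (heq x).symm)] at h
  refine h.congr_deriv ?_
  have hl2 : Real.log 2 ≠ 0 := Real.log_ne_zero_of_pos_of_ne_one two_pos (by norm_num)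
  have hdne : β + (1 - β) * (2:ℝ) ^ (-ρ) ≠ 0 := ne_of_gt (denom_pos hβ0 hβ1 ρ)
  field_simp

lemma E0_deriv_eq {β : ℝ} (hβ0 : 0 < β) (hβ1 : β < 1) (ρ : ℝ) :
    deriv (gallagerE0 β) ρ = (1 - β) / (β * (2:ℝ) ^ ρ + (1 - β)) := by
  rw [(E0_hasDeriv hβ0 hβ1 ρ).deriv]
  have h2 : (0:ℝ) < (2:ℝ) ^ ρ := Real.rpow_pos_of_pos two_pos _
  have hneg : (2:ℝ) ^ (-ρ) = ((2:ℝ) ^ ρ)⁻¹ := Real.rpow_neg (by norm_num) ρ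
  have hd : 0 < β + (1 - β) * (2:ℝ) ^ (-ρ) := denom_pos hβ0 hβ1 ρ
  have hd2 : 0 < β * (2:ℝ) ^ ρ + (1 - β) := by nlinarith
  rw [hneg] at hd ⊢
  field_simp

lemma E0_deriv_anti {β : ℝ} (hβ0 : 0 < β) (hβ1 : β < 1) :
    StrictAnti (deriv (gallagerE0 β)) := by
  intro a b hab
  rw [E0_deriv_eq hβ0 hβ1, E0_deriv_eq hβ0 hβ1]
  have h2a : (0:ℝ) < (2:ℝ) ^ a := Real.rpow_pos_of_pos two_pos _
  have hlt : (2:ℝ) ^ a < (2:ℝ) ^ b :=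
    Real.rpow_lt_rpow_left_iff (by norm_num : (1:ℝ) < 2) |>.2 hab
  have hda : 0 < β * (2:ℝ) ^ a + (1 - β) := by nlinarith
  have hdb : 0 < β * (2:ℝ) ^ b + (1 - β) := by nlinarith
  apply div_lt_div_of_pos_left (by linarith) hda
  nlinarith

lemma E0_cont {β : ℝ} (hβ0 : 0 < β) (hβ1 : β < 1) : Continuous (gallagerE0 β) := by
  have : Differentiable ℝ (gallagerE0 β) := fun x => (E0_hasDeriv hβ0 hβ1 x).differentiableAt
  exact this.continuous

lemma E0_concave {β : ℝ} (hβ0 : 0 < β) (hβ1 : β < 1) :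
    StrictConcaveOn ℝ Set.univ (gallagerE0 β) :=
  StrictAnti.strictConcaveOn_univ_of_deriv (E0_cont hβ0 hβ1) (E0_deriv_anti hβ0 hβ1)

lemma E0_zero (β : ℝ) : gallagerE0 β 0 = 0 := by
  simp [gallagerE0]

lemma E0_slope_anti {β : ℝ} (hβ0 : 0 < β) (hβ1 : β < 1) {a b : ℝ} (ha : 0 < a) (hab : a < b) :
    gallagerE0 β b * a < gallagerE0 β a * b := by
  have hb : 0 < b := ha.trans hab
  have key := (E0_concave hβ0 hβ1).2 (Set.mem_univ b) (Set.mem_univ (0:ℝ))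
    (ne_of_gt hb)
    (div_pos ha hb) (by rw [sub_pos]; exact (div_lt_one hb).2 hab)
    (by ring : a / b + (1 - a / b) = 1)
  simp only [smul_eq_mul, mul_zero, add_zero, E0_zero] at key
  have harg : a / b * b = a := div_mul_cancel₀ a (ne_of_gt hb)
  rw [harg] at key
  have h2 : a / b * gallagerE0 β b < gallagerE0 β a := key
  calc gallagerE0 β b * a = (a / b * gallagerE0 β b) * b := by field_simp
  _ < gallagerE0 β a * b := mul_lt_mul_of_pos_right h2 hb

lemma E0_lt_cap {β : ℝ} (hβ0 : 0 < β) (hβ1 : β < 1) {ρ : ℝ} (hρ : 0 < ρ) :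
    gallagerE0 β ρ < ρ * (1 - β) := by
  set ψ : ℝ → ℝ := fun x => x * (1 - β) - gallagerE0 β x with hψ
  have hd : ∀ x : ℝ, HasDerivAt ψ ((1 - β) - deriv (gallagerE0 β) x) x := by
    intro x
    have := ((hasDerivAt_id x).mul_const (1 - β)).sub (E0_hasDeriv hβ0 hβ1 x)
    rw [(E0_hasDeriv hβ0 hβ1 x).deriv]
    exact (by simpa using this : HasDerivAt ((fun y => y * (1 - β)) - gallagerE0 β) _ x)
  have hmono : StrictMonoOn ψ (Set.Ici 0) := by
    apply strictMonoOn_of_deriv_pos (convex_Ici 0)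
    · exact (Continuous.sub (continuous_id.mul continuous_const) (E0_cont hβ0 hβ1)).continuousOn
    · intro x hx
      rw [interior_Ici] at hx
      rw [(hd x).deriv, E0_deriv_eq hβ0 hβ1]
      have h2 : (1:ℝ) < (2:ℝ) ^ x :=
        Real.one_lt_rpow_iff_of_pos (by norm_num) |>.2 (Or.inl ⟨by norm_num, Set.mem_Ioi.1 hx⟩)
      have hdb : 0 < β * (2:ℝ) ^ x + (1 - β) := by nlinarith
      rw [sub_pos, div_lt_iff₀ hdb]
      nlinarith [mul_pos (mul_pos hβ0 (sub_pos.2 hβ1)) (sub_pos.2 h2)]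
  have h0 : ψ 0 = 0 := by simp [hψ, E0_zero]
  have := hmono (Set.self_mem_Ici) (Set.mem_Ici.2 hρ.le) hρ
  rw [h0] at this
  simpa [hψ, sub_pos] using this

/-- Optimization-by-substitution step of Theorem 3.1: with `r S` the unique positive
solution of `E_0(ρ) = ρ S` for `S ∈ (0, 1-β)`, the optimized low-priority delay
exponent `sup_{R_L ≤ R' < 1-β-R_H} r(R_H+R')·R'` equals
`sup_{0 < ρ ≤ r(R_H+R_L)} (E_0(ρ) - ρ R_H)`. -/
theorem low_priority_substitution (β RH RL : ℝ) (hβ : β ∈ Set.Ioo (0 : ℝ) 1)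
    (hRH : 0 < RH) (hRL : 0 < RL) (hsum : RH + RL < 1 - β)
    (r : ℝ → ℝ)
    (hr : ∀ S ∈ Set.Ioo (0 : ℝ) (1 - β), 0 < r S ∧ gallagerE0 β (r S) = r S * S) :
    sSup ((fun R' => r (RH + R') * R') '' Set.Ico RL (1 - β - RH)) =
      sSup ((fun ρ => gallagerE0 β ρ - ρ * RH) '' Set.Ioc 0 (r (RH + RL))) := by
  obtain ⟨hβ0, hβ1⟩ := hβ
  have hS0 : (RH + RL) ∈ Set.Ioo (0:ℝ) (1 - β) := ⟨by linarith, hsum⟩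
  obtain ⟨hρHLpos, hρHLeq⟩ := hr _ hS0
  -- uniqueness of the positive solution
  have uniq : ∀ S ∈ Set.Ioo (0:ℝ) (1 - β), ∀ ρ : ℝ, 0 < ρ → gallagerE0 β ρ = ρ * S → ρ = r S := by
    intro S hS ρ hρ heq
    obtain ⟨hrpos, hreq⟩ := hr S hS
    rcases lt_trichotomy ρ (r S) with h | h | h
    · have := E0_slope_anti hβ0 hβ1 hρ h
      rw [heq, hreq] at this
      nlinarith
    · exact h
    · have := E0_slope_anti hβ0 hβ1 hrpos h
      rw [heq, hreq] at this
      nlinarith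
  suffices hset : ((fun R' => r (RH + R') * R') '' Set.Ico RL (1 - β - RH)) =
      ((fun ρ => gallagerE0 β ρ - ρ * RH) '' Set.Ioc 0 (r (RH + RL))) by rw [hset]
  apply Set.Subset.antisymm
  · rintro _ ⟨R', ⟨hR'lo, hR'hi⟩, rfl⟩
    have hSmem : (RH + R') ∈ Set.Ioo (0:ℝ) (1 - β) := ⟨by linarith, by linarith⟩
    obtain ⟨hρpos, hρeq⟩ := hr _ hSmem
    refine ⟨r (RH + R'), ⟨hρpos, ?_⟩, ?_⟩
    · -- r (RH + R') ≤ r (RH + RL)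
      by_contra hlt
      push_neg at hlt
      have := E0_slope_anti hβ0 hβ1 hρHLpos hlt
      rw [hρeq, hρHLeq] at this
      nlinarith [mul_nonneg (mul_nonneg
        (sub_nonneg.2 (by linarith : RH + RL ≤ RH + R')) hρpos.le) hρHLpos.le]
    · show gallagerE0 β (r (RH + R')) - r (RH + R') * RH = r (RH + R') * R'
      rw [hρeq]; ring
  · rintro _ ⟨ρ, ⟨hρpos, hρle⟩, rfl⟩
    set S := gallagerE0 β ρ / ρ with hSdef
    have hEρ : gallagerE0 β ρ = ρ * S := by
      rw [hSdef]; field_simp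
    have hScap : S < 1 - β := by
      rw [hSdef, div_lt_iff₀ hρpos]
      have := E0_lt_cap hβ0 hβ1 hρpos
      linarith
    have hSlo : RH + RL ≤ S := by
      rcases eq_or_lt_of_le hρle with h | h
      · rw [h] at hEρ
        have h2 := hρHLeq.symm.trans hEρ
        have := mul_left_cancel₀ (ne_of_gt hρHLpos) h2
        linarith
      · by_contra hc
        push_neg at hc
        have hslope := E0_slope_anti hβ0 hβ1 hρpos h
        rw [hEρ, hρHLeq] at hslope
        have hkey := mul_pos (mul_pos (sub_pos.2 hc) hρpos) hρHLpos
        nlinarith [hkey]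
    have hSpos : 0 < S := lt_of_lt_of_le (by linarith) hSlo
    refine ⟨S - RH, ⟨by linarith, by linarith⟩, ?_⟩
    have hr' : ρ = r (RH + (S - RH)) := by
      apply uniq _ ⟨by linarith, by linarith⟩ _ hρpos
      rw [hEρ]; ring_nf
    show r (RH + (S - RH)) * (S - RH) = gallagerE0 β ρ - ρ * RH
    rw [← hr', hEρ]; ring
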